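/- Let q be a prime power and let u, v be real exponents with 2 ≤ u < ∞ and 1 ≤ v ≤ u. Then for every F : H_1(F_q) → ℂ one has ‖M_{H1} F‖_{ℓ^v(P^1(F_q))} ≤ 2√2 · q^{1 + 1/v − 2/u} · ‖F‖_{ℓ^u(H_1(F_q))}. -/

import Mathlib

/-!
`K` plays the role of the finite field `F_q` with `q = Fintype.card K` elements
(the cardinality of a finite field is automatically a prime power).
The Heisenberg group `H₁(F_q)` is identified with `K × K × K`.
The projective line `P¹(F_q)` is identified with `Option K`, where `some m`
corresponds to the direction class `[1 : m]` and `none` to `[0 : 1]`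
(every class has a unique such normal form).
-/

noncomputable section

open Finset

lemma powerMean {ι : Type*} (s : Finset ι) (f : ι → ℝ) (hf : ∀ i ∈ s, 0 ≤ f i)
    {p : ℝ} (hp : 1 ≤ p) :
    ∑ i ∈ s, f i ≤ (s.card : ℝ) ^ (1 - 1/p) * (∑ i ∈ s, f i ^ p) ^ (1/p) := by
  have hp0 : 0 < p := lt_of_lt_of_le one_pos hp
  rcases s.eq_empty_or_nonempty with rfl | hs
  · simp only [Finset.sum_empty, Finset.card_empty, Nat.cast_zero]
    exact mul_nonneg (Real.rpow_nonneg le_rfl _) (Real.rpow_nonneg le_rfl _)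
  have hn : (0:ℝ) < s.card := by exact_mod_cast hs.card_pos
  have h := Real.arith_mean_le_rpow_mean s (fun _ => (s.card:ℝ)⁻¹) f
      (fun i _ => by positivity)
      (by simp [Finset.sum_const, nsmul_eq_mul, mul_inv_cancel₀ (ne_of_gt hn)])
      hf hp
  have h1 : ∑ i ∈ s, (s.card:ℝ)⁻¹ * f i = (s.card:ℝ)⁻¹ * ∑ i ∈ s, f i := by
    rw [Finset.mul_sum]
  have h2 : ∑ i ∈ s, (s.card:ℝ)⁻¹ * f i ^ p = (s.card:ℝ)⁻¹ * ∑ i ∈ s, f i ^ p := by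
    rw [Finset.mul_sum]
  rw [h1, h2] at h
  have h3 : ((s.card:ℝ)⁻¹ * ∑ i ∈ s, f i ^ p) ^ (1/p)
      = ((s.card:ℝ)⁻¹) ^ (1/p) * (∑ i ∈ s, f i ^ p) ^ (1/p) := by
    apply Real.mul_rpow (by positivity)
    exact Finset.sum_nonneg fun i hi => Real.rpow_nonneg (hf i hi) p
  rw [h3] at h
  have h4 : (s.card:ℝ) * (((s.card:ℝ)⁻¹) ^ ((1:ℝ)/p)) = (s.card:ℝ) ^ (1 - 1/p) := by
    rw [Real.inv_rpow hn.le, Real.rpow_sub hn, Real.rpow_one]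
    ring
  calc ∑ i ∈ s, f i = (s.card:ℝ) * ((s.card:ℝ)⁻¹ * ∑ i ∈ s, f i) := by
        field_simp
    _ ≤ (s.card:ℝ) * (((s.card:ℝ)⁻¹) ^ ((1:ℝ)/p) * (∑ i ∈ s, f i ^ p) ^ (1/p)) := by
        apply mul_le_mul_of_nonneg_left h hn.le
    _ = (s.card : ℝ) ^ (1 - 1/p) * (∑ i ∈ s, f i ^ p) ^ (1/p) := by
        rw [← mul_assoc, h4]

lemma cordoba {ι α : Type*} [Fintype ι] [Fintype α] [DecidableEq α] (q : ℕ)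
    (E : ι → Finset α) (hcard : ∀ d, (E d).card ≤ q)
    (hint : ∀ d d', d ≠ d' → ((E d) ∩ (E d')).card ≤ 1)
    (W : α → ℝ) (hW : ∀ z, 0 ≤ W z) :
    ∑ d : ι, (∑ z ∈ E d, W z)^2 ≤ ((q : ℝ) + Fintype.card ι) * ∑ z : α, (W z)^2 := by
  classical
  set T : ι → ℝ := fun d => ∑ z ∈ E d, W z with hT
  have hT0 : ∀ d, 0 ≤ T d := fun d => Finset.sum_nonneg fun z _ => hW z
  set S : ℝ := ∑ d : ι, T d ^ 2 with hS
  have hS0 : 0 ≤ S := Finset.sum_nonneg fun d _ => sq_nonneg _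
  set h : α → ℝ := fun z => ∑ d : ι, if z ∈ E d then T d else 0 with hh
  have hW2 : (0:ℝ) ≤ ∑ z : α, (W z)^2 := Finset.sum_nonneg fun z _ => sq_nonneg _
  -- step 1 : S = ∑ z, W z * h z
  have expand : ∀ d, T d ^ 2 = ∑ z : α, (if z ∈ E d then T d * W z else 0) := by
    intro d
    rw [Fintype.sum_ite_mem, ← Finset.mul_sum, ← sq]
  have step1 : S = ∑ z : α, W z * h z := by
    rw [hS]
    calc ∑ d : ι, T d ^2 = ∑ d : ι, ∑ z : α, (if z ∈ E d then T d * W z else 0) :=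
          Finset.sum_congr rfl fun d _ => expand d
      _ = ∑ z : α, ∑ d : ι, (if z ∈ E d then T d * W z else 0) := Finset.sum_comm
      _ = ∑ z : α, W z * h z := by
          apply Finset.sum_congr rfl; intro z _
          simp only [hh]
          rw [Finset.mul_sum]
          apply Finset.sum_congr rfl; intro d _
          by_cases hz : z ∈ E d <;> simp [hz, mul_comm]
  -- step 2 : Cauchy–Schwarz
  have step2 : S^2 ≤ (∑ z : α, (W z)^2) * (∑ z : α, (h z)^2) := by
    rw [step1]
    exact Finset.sum_mul_sq_le_sq_mul_sq Finset.univ W h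
  -- step 3 : expand ∑ h²
  have hzsum : ∀ (A B : Finset α) (a b : ℝ),
      ∑ z : α, (if z ∈ A then a else 0) * (if z ∈ B then b else 0)
        = ((A ∩ B).card : ℝ) * (a*b) := by
    intro A B a b
    have e : ∀ z, (if z ∈ A then a else 0) * (if z ∈ B then b else 0)
        = if z ∈ A ∩ B then a*b else 0 := by
      intro z; by_cases h1 : z ∈ A <;> by_cases h2 : z ∈ B <;>
        simp [h1, h2, Finset.mem_inter]
    rw [Finset.sum_congr rfl fun z _ => e z, Fintype.sum_ite_mem, Finset.sum_const,
      nsmul_eq_mul]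
  have step3 : ∑ z : α, (h z)^2
      = ∑ d : ι, ∑ d' : ι, T d * T d' * ((E d ∩ E d').card : ℝ) := by
    calc ∑ z : α, (h z)^2
        = ∑ z : α, ∑ d : ι, ∑ d' : ι,
            (if z ∈ E d then T d else 0) * (if z ∈ E d' then T d' else 0) := by
          apply Finset.sum_congr rfl; intro z _
          simp only [hh, sq]
          rw [Finset.sum_mul_sum]
      _ = ∑ d : ι, ∑ z : α, ∑ d' : ι,
            (if z ∈ E d then T d else 0) * (if z ∈ E d' then T d' else 0) :=
          Finset.sum_comm
      _ = ∑ d : ι, ∑ d' : ι, ∑ z : α,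
            (if z ∈ E d then T d else 0) * (if z ∈ E d' then T d' else 0) :=
          Finset.sum_congr rfl fun d _ => Finset.sum_comm
      _ = ∑ d : ι, ∑ d' : ι, T d * T d' * ((E d ∩ E d').card : ℝ) := by
          apply Finset.sum_congr rfl; intro d _
          apply Finset.sum_congr rfl; intro d' _
          rw [hzsum]; ring
  -- step 4 : bound ∑ h²
  have per_d : ∀ d : ι, ∑ d' : ι, T d * T d' * ((E d ∩ E d').card : ℝ)
      ≤ T d ^2 * q + ∑ d' : ι, T d * T d' := by
    intro d
    have split : ∑ d' : ι, T d * T d' * ((E d ∩ E d').card : ℝ)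
        = T d * T d * ((E d ∩ E d).card : ℝ)
          + ∑ d' ∈ Finset.univ.erase d, T d * T d' * ((E d ∩ E d').card : ℝ) :=
      (Finset.add_sum_erase _ _ (Finset.mem_univ d)).symm
    rw [split]
    have diag : T d * T d * ((E d ∩ E d).card : ℝ) ≤ T d ^2 * q := by
      rw [Finset.inter_self, ← sq]
      apply mul_le_mul_of_nonneg_left _ (sq_nonneg _)
      exact_mod_cast hcard d
    have offdiag : ∑ d' ∈ Finset.univ.erase d, T d * T d' * ((E d ∩ E d').card : ℝ)
        ≤ ∑ d' : ι, T d * T d' := by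
      calc ∑ d' ∈ Finset.univ.erase d, T d * T d' * ((E d ∩ E d').card : ℝ)
          ≤ ∑ d' ∈ Finset.univ.erase d, T d * T d' := by
            apply Finset.sum_le_sum; intro d' hd'
            have hne : d ≠ d' := fun e => (Finset.mem_erase.mp hd').1 e.symm
            have : ((E d ∩ E d').card : ℝ) ≤ 1 := by exact_mod_cast hint d d' hne
            calc T d * T d' * ((E d ∩ E d').card : ℝ) ≤ T d * T d' * 1 :=
                  mul_le_mul_of_nonneg_left this (mul_nonneg (hT0 d) (hT0 d'))
              _ = T d * T d' := mul_one _
        _ ≤ ∑ d' : ι, T d * T d' := by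
            apply Finset.sum_le_sum_of_subset_of_nonneg (Finset.subset_univ _)
            intro d' _ _; exact mul_nonneg (hT0 d) (hT0 d')
    linarith
  have step4 : ∑ z : α, (h z)^2 ≤ ((q:ℝ) + Fintype.card ι) * S := by
    have hTsq : (∑ d : ι, T d)^2 ≤ (Fintype.card ι : ℝ) * S := by
      have cs := Finset.sum_mul_sq_le_sq_mul_sq Finset.univ T (fun _ => (1:ℝ))
      simp only [mul_one, one_pow, Finset.sum_const, Finset.card_univ, nsmul_eq_mul] at cs
      calc (∑ d : ι, T d)^2 ≤ (∑ d : ι, T d ^2) * (Fintype.card ι : ℝ) := cs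
        _ = (Fintype.card ι : ℝ) * S := mul_comm _ _
    calc ∑ z : α, (h z)^2 = ∑ d : ι, ∑ d' : ι, T d * T d' * ((E d ∩ E d').card : ℝ) := step3
      _ ≤ ∑ d : ι, (T d ^2 * q + ∑ d' : ι, T d * T d') :=
          Finset.sum_le_sum fun d _ => per_d d
      _ = (∑ d : ι, T d ^2) * (q:ℝ) + (∑ d : ι, T d) * (∑ d' : ι, T d') := by
          rw [Finset.sum_add_distrib, ← Finset.sum_mul, ← Finset.sum_mul_sum]
      _ = (q:ℝ) * S + (∑ d : ι, T d)^2 := by rw [hS, sq]; ring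
      _ ≤ (q:ℝ) * S + (Fintype.card ι : ℝ) * S := by linarith
      _ = ((q:ℝ) + Fintype.card ι) * S := by ring
  -- step 5 : conclude
  rcases eq_or_lt_of_le hS0 with hS0' | hSpos
  · rw [← hS0']
    positivity
  · have key : S * S ≤ (((q:ℝ) + Fintype.card ι) * ∑ z : α, (W z)^2) * S := by
      calc S * S = S^2 := (sq S).symm
        _ ≤ (∑ z : α, (W z)^2) * (∑ z : α, (h z)^2) := step2
        _ ≤ (∑ z : α, (W z)^2) * (((q:ℝ) + Fintype.card ι) * S) := by
            apply mul_le_mul_of_nonneg_left step4 hW2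
        _ = (((q:ℝ) + Fintype.card ι) * ∑ z : α, (W z)^2) * S := by ring
    have := le_of_mul_le_mul_right key hSpos
    exact this

/-- Representative direction vector of a projective class. -/
def dirVec {K : Type*} [Field K] : Option K → K × K
  | some m => (1, m)
  | none => (0, 1)

/-- The point of the horizontal line through `p = (x₀, y₀, t₀)` with direction
vector `v = (a, b)` corresponding to the parameter `s`, namely
`(x₀ + s a, y₀ + s b, t₀ + s (x₀ b - y₀ a))`. -/
def hPoint {K : Type*} [Field K] (p : K × K × K) (v : K × K) (s : K) : K × K × K :=
  (p.1 + s * v.1, p.2.1 + s * v.2, p.2.2 + s * (p.1 * v.2 - p.2.1 * v.1))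

/-- Sum of `|F|` along the horizontal line through `p` with direction vector `v`. -/
def lineSumH1 {K : Type*} [Field K] [Fintype K] (Fc : K × K × K → ℂ)
    (p : K × K × K) (v : K × K) : ℝ :=
  ∑ s : K, ‖Fc (hPoint p v s)‖

/-- The horizontal Kakeya maximal function `M_{H₁} F` on `P¹(F_q) ≃ Option K`:
the maximum over all base points `p` of the sum of `|F|` along the horizontal
line through `p` in the given direction. -/
def MH1 {K : Type*} [Field K] [Fintype K] (Fc : K × K × K → ℂ) (d : Option K) : ℝ :=
  Finset.univ.sup' ⟨((0 : K), (0 : K), (0 : K)), Finset.mem_univ _⟩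
    fun p => lineSumH1 Fc p (dirVec d)

/-- `ℓ^r` norm of a complex-valued function on a finite set. -/
def lpNormC {X : Type*} [Fintype X] (r : ℝ) (g : X → ℂ) : ℝ :=
  (∑ x, ‖g x‖ ^ r) ^ (1 / r)

/-- `ℓ^r` norm of a real-valued function on a finite set. -/
def lpNormR {X : Type*} [Fintype X] (r : ℝ) (g : X → ℝ) : ℝ :=
  (∑ x, |g x| ^ r) ^ (1 / r)

/-- For `2 ≤ u < ∞` and `1 ≤ v ≤ u`,
`‖M_{H₁} F‖_{ℓ^v(P¹(F_q))} ≤ 2√2 · q^{1 + 1/v - 2/u} · ‖F‖_{ℓ^u(H₁(F_q))}`. -/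
theorem stmt_4 {K : Type*} [Field K] [Fintype K] (u v : ℝ) (hu : 2 ≤ u)
    (hv : 1 ≤ v) (hvu : v ≤ u) (Fc : K × K × K → ℂ) :
    lpNormR v (MH1 Fc) ≤
      2 * Real.sqrt 2 * (Fintype.card K : ℝ) ^ (1 + 1 / v - 2 / u) * lpNormC u Fc := by
  classical
  have hq1 : 1 < Fintype.card K := Fintype.one_lt_card
  set q : ℕ := Fintype.card K with hq
  have hqR : (1:ℝ) ≤ (q:ℝ) := by exact_mod_cast hq1.le
  have hq0 : (0:ℝ) < (q:ℝ) := lt_of_lt_of_le one_pos hqR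
  have hu0 : (0:ℝ) < u := by linarith
  have hv0 : (0:ℝ) < v := by linarith
  have hune : u ≠ 0 := ne_of_gt hu0
  have hvne : v ≠ 0 := ne_of_gt hv0
  -- choose, for each direction, a base point achieving the maximum
  have hmax : ∀ d : Option K, ∃ p : K × K × K, MH1 Fc d = lineSumH1 Fc p (dirVec d) := by
    intro d
    obtain ⟨p, -, hp⟩ := Finset.exists_mem_eq_sup'
      (⟨((0:K),(0:K),(0:K)), Finset.mem_univ _⟩ : (Finset.univ : Finset (K × K × K)).Nonempty)
      (fun p => lineSumH1 Fc p (dirVec d))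
    exact ⟨p, hp⟩
  choose A hA using hmax
  -- the vertical ℓ^u marginal of |Fc|
  set G : K × K → ℝ :=
    fun z => (∑ t : K, ‖Fc (z.1, z.2, t)‖ ^ u) ^ (1/u) with hGdef
  have hG0 : ∀ z, 0 ≤ G z := fun z =>
    Real.rpow_nonneg (Finset.sum_nonneg fun t _ =>
      Real.rpow_nonneg (norm_nonneg _) u) _
  have hGu : ∀ z : K × K, G z ^ u = ∑ t : K, ‖Fc (z.1, z.2, t)‖ ^ u := by
    intro z
    have h0 : 0 ≤ ∑ t : K, ‖Fc (z.1, z.2, t)‖ ^ u :=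
      Finset.sum_nonneg fun t _ => Real.rpow_nonneg (norm_nonneg _) u
    show ((∑ t : K, ‖Fc (z.1, z.2, t)‖ ^ u) ^ (1/u)) ^ u = _
    rw [one_div, Real.rpow_inv_rpow h0 hune]
  have hFG : ∀ w : K × K × K, ‖Fc w‖ ≤ G (w.1, w.2.1) := by
    intro w
    have h1 : ‖Fc w‖ ^ u ≤ ∑ t : K, ‖Fc (w.1, w.2.1, t)‖ ^ u := by
      have := Finset.single_le_sum (f := fun t => ‖Fc (w.1, w.2.1, t)‖ ^ u)
        (fun t _ => Real.rpow_nonneg (norm_nonneg _) u) (Finset.mem_univ w.2.2)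
      simpa using this
    have h2 : ‖Fc w‖ = (‖Fc w‖ ^ u) ^ (1/u) := by
      rw [one_div, Real.rpow_rpow_inv (norm_nonneg _) hune]
    rw [h2]
    exact Real.rpow_le_rpow (Real.rpow_nonneg (norm_nonneg _) u) h1 (by positivity)
  -- the planar lines
  set L : Option K → K → K × K :=
    fun d s => ((A d).1 + s * (dirVec d).1, (A d).2.1 + s * (dirVec d).2) with hLdef
  have hinj : ∀ d, Function.Injective (L d) := by
    intro d s s' hss
    have h1 := congrArg Prod.fst hss
    have h2 := congrArg Prod.snd hss
    simp only [hLdef] at h1 h2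
    cases d with
    | none =>
      simp only [dirVec, mul_one, add_right_inj] at h2
      exact h2
    | some m =>
      simp only [dirVec, mul_one, add_right_inj] at h1
      exact h1
  set E : Option K → Finset (K × K) := fun d => Finset.image (L d) Finset.univ with hEdef
  have hEcard : ∀ d, (E d).card = q := by
    intro d
    simp only [hEdef]
    rw [Finset.card_image_of_injective _ (hinj d), Finset.card_univ]
  have hkey : ∀ d d' : Option K, d ≠ d' → ∀ s t s' t' : K,
      L d s = L d' t → L d s' = L d' t' → s = s' := by
    intro d d' hne s t s' t' hst hst'
    have h1f := congrArg Prod.fst hst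
    have h1s := congrArg Prod.snd hst
    have h2f := congrArg Prod.fst hst'
    have h2s := congrArg Prod.snd hst'
    simp only [hLdef] at h1f h1s h2f h2s
    cases d with
    | none =>
      cases d' with
      | none => exact absurd rfl hne
      | some m' =>
        simp only [dirVec, mul_one, mul_zero, add_zero] at h1f h1s h2f h2s
        linear_combination h1s - h2s - m' * (h1f - h2f)
    | some m =>
      cases d' with
      | none =>
        simp only [dirVec, mul_one, mul_zero, add_zero] at h1f h1s h2f h2s
        linear_combination h1f - h2f
      | some m' =>
        simp only [dirVec, mul_one] at h1f h1s h2f h2s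
        have hmm : m ≠ m' := by
          intro e; exact hne (by rw [e])
        have e3 : (s - s') * (m - m') = 0 := by
          linear_combination h1s - h2s - m' * (h1f - h2f)
        rcases mul_eq_zero.mp e3 with e | e
        · exact sub_eq_zero.mp e
        · exact absurd (sub_eq_zero.mp e) hmm
  have hEint : ∀ d d', d ≠ d' → ((E d) ∩ (E d')).card ≤ 1 := by
    intro d d' hne
    rw [Finset.card_le_one]
    intro z hz z' hz'
    simp only [hEdef, Finset.mem_inter, Finset.mem_image, Finset.mem_univ, true_and]
      at hz hz'
    obtain ⟨⟨s, hs⟩, ⟨t, ht⟩⟩ := hz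
    obtain ⟨⟨s', hs'⟩, ⟨t', ht'⟩⟩ := hz'
    have h1 : L d s = L d' t := hs.trans ht.symm
    have h2 : L d s' = L d' t' := hs'.trans ht'.symm
    have hss : s = s' := hkey d d' hne s t s' t' h1 h2
    rw [← hs, ← hs', hss]
  -- the line sums of G
  set T : Option K → ℝ := fun d => ∑ z ∈ E d, G z with hTdef
  have hT0 : ∀ d, 0 ≤ T d := fun d => Finset.sum_nonneg fun z _ => hG0 z
  have hM0 : ∀ d, 0 ≤ MH1 Fc d := by
    intro d; rw [hA d]
    exact Finset.sum_nonneg fun s _ => norm_nonneg _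
  have hMT : ∀ d, MH1 Fc d ≤ T d := by
    intro d
    rw [hA d]
    have step : lineSumH1 Fc (A d) (dirVec d) ≤ ∑ s : K, G (L d s) := by
      apply Finset.sum_le_sum
      intro s _
      have := hFG (hPoint (A d) (dirVec d) s)
      simpa [hPoint, hLdef] using this
    have himg : ∑ s : K, G (L d s) = ∑ z ∈ E d, G z := by
      simp only [hEdef]
      exact (Finset.sum_image (fun x _ y _ h => hinj d h)).symm
    exact step.trans (le_of_eq himg)
  -- Córdoba L² estimate applied to H = G^(u/2)
  set H : K × K → ℝ := fun z => G z ^ (u/2) with hHdef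
  have hH0 : ∀ z, 0 ≤ H z := fun z => Real.rpow_nonneg (hG0 z) _
  have hcord := cordoba q E (fun d => le_of_eq (hEcard d)) hEint H hH0
  set TH : Option K → ℝ := fun d => ∑ z ∈ E d, H z with hTHdef
  have hTH0 : ∀ d, 0 ≤ TH d := fun d => Finset.sum_nonneg fun z _ => hH0 z
  have hcardopt : ((Fintype.card (Option K) : ℕ) : ℝ) = (q:ℝ) + 1 := by
    rw [Fintype.card_option, hq]; push_cast; ring
  have hH2 : ∀ z, (H z)^2 = G z ^ u := by
    intro z
    show (G z ^ (u/2))^2 = G z ^ u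
    rw [← Real.rpow_natCast (G z ^ (u/2)) 2, ← Real.rpow_mul (hG0 z)]
    congr 1
    push_cast; ring
  have hGsum : ∑ z : K × K, G z ^ u = ∑ w : K × K × K, ‖Fc w‖ ^ u := by
    rw [Finset.sum_congr rfl fun z _ => hGu z]
    simp [Fintype.sum_prod_type]
  -- pointwise Hölder on each line : T d ≤ q^(1-2/u) * TH d^(2/u)
  have hpm1 : ∀ d, T d ≤ (q:ℝ) ^ (1 - 2/u) * TH d ^ (2/u) := by
    intro d
    have hp : (1:ℝ) ≤ u/2 := by linarith
    calc T d ≤ (((E d).card : ℕ) : ℝ) ^ (1 - 1/(u/2)) * (∑ z ∈ E d, G z ^ (u/2)) ^ (1/(u/2)) :=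
          powerMean (E d) G (fun z _ => hG0 z) hp
      _ = (q:ℝ) ^ (1 - 2/u) * TH d ^ (2/u) := by
          rw [hEcard d, one_div_div]
  have hpmu : ∀ d, T d ^ u ≤ (q:ℝ) ^ (u - 2) * TH d ^ 2 := by
    intro d
    have e1 : (1 - 2/u) * u = u - 2 := by field_simp
    have e2 : (2/u) * u = 2 := by field_simp
    calc T d ^ u ≤ ((q:ℝ) ^ (1 - 2/u) * TH d ^ (2/u)) ^ u :=
          Real.rpow_le_rpow (hT0 d) (hpm1 d) hu0.le
      _ = ((q:ℝ) ^ (1 - 2/u)) ^ u * (TH d ^ (2/u)) ^ u :=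
          Real.mul_rpow (Real.rpow_nonneg hq0.le _) (Real.rpow_nonneg (hTH0 d) _)
      _ = (q:ℝ) ^ ((1 - 2/u) * u) * TH d ^ ((2/u) * u) := by
          rw [← Real.rpow_mul hq0.le, ← Real.rpow_mul (hTH0 d)]
      _ = (q:ℝ) ^ (u - 2) * TH d ^ (2:ℝ) := by rw [e1, e2]
      _ = (q:ℝ) ^ (u - 2) * TH d ^ 2 := by
          rw [show (2:ℝ) = ((2:ℕ):ℝ) by norm_num, Real.rpow_natCast]
  -- the ℓ^u estimate on T
  have hSu : ∑ d : Option K, T d ^ u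
      ≤ (q:ℝ)^(u-2) * (2*(q:ℝ)+1) * ∑ w : K × K × K, ‖Fc w‖ ^ u := by
    calc ∑ d : Option K, T d ^ u ≤ ∑ d : Option K, (q:ℝ)^(u-2) * TH d ^2 :=
          Finset.sum_le_sum fun d _ => hpmu d
      _ = (q:ℝ)^(u-2) * ∑ d : Option K, TH d ^2 := by rw [← Finset.mul_sum]
      _ ≤ (q:ℝ)^(u-2) * (((q:ℝ) + (Fintype.card (Option K) : ℕ)) * ∑ z : K × K, H z ^2) :=
          mul_le_mul_of_nonneg_left hcord (Real.rpow_nonneg hq0.le _)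
      _ = (q:ℝ)^(u-2) * (2*(q:ℝ)+1) * ∑ w : K × K × K, ‖Fc w‖ ^ u := by
          rw [hcardopt, Finset.sum_congr rfl fun z _ => hH2 z, hGsum]
          ring
  -- ℓ^v ≤ ℓ^u on the (q+1)-element set of directions
  have hexp : ∀ d, (T d ^ v) ^ (u/v) = T d ^ u := by
    intro d
    rw [← Real.rpow_mul (hT0 d)]
    congr 1; field_simp
  have hpm2 : ∑ d : Option K, T d ^ v
      ≤ ((q:ℝ)+1) ^ (1 - v/u) * (∑ d : Option K, T d ^ u) ^ (v/u) := by
    have hp : (1:ℝ) ≤ u/v := by rw [le_div_iff₀ hv0]; linarith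
    calc ∑ d : Option K, T d ^ v
        ≤ (((Finset.univ : Finset (Option K)).card : ℕ) : ℝ) ^ (1 - 1/(u/v))
            * (∑ d : Option K, (T d ^ v) ^ (u/v)) ^ (1/(u/v)) :=
          powerMean Finset.univ (fun d => T d ^ v)
            (fun d _ => Real.rpow_nonneg (hT0 d) v) hp
      _ = ((q:ℝ)+1) ^ (1 - v/u) * (∑ d : Option K, T d ^ u) ^ (v/u) := by
          rw [Finset.card_univ, hcardopt, one_div_div,
            Finset.sum_congr rfl fun d _ => hexp d]
  -- final assembly
  set Nu : ℝ := ∑ w : K × K × K, ‖Fc w‖ ^ u with hNudef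
  have hNu0 : 0 ≤ Nu :=
    Finset.sum_nonneg fun w _ => Real.rpow_nonneg (norm_nonneg _) u
  have hNorm : lpNormC u Fc = Nu ^ (1/u) := rfl
  have hSu0 : 0 ≤ ∑ d : Option K, T d ^ u :=
    Finset.sum_nonneg fun d _ => Real.rpow_nonneg (hT0 d) u
  have hSv0 : 0 ≤ ∑ d : Option K, T d ^ v :=
    Finset.sum_nonneg fun d _ => Real.rpow_nonneg (hT0 d) v
  have hstep1 : lpNormR v (MH1 Fc) ≤ (∑ d : Option K, T d ^ v) ^ (1/v) := by
    have hsum : ∑ d : Option K, |MH1 Fc d| ^ v ≤ ∑ d : Option K, T d ^ v := by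
      apply Finset.sum_le_sum
      intro d _
      rw [abs_of_nonneg (hM0 d)]
      exact Real.rpow_le_rpow (hM0 d) (hMT d) hv0.le
    exact Real.rpow_le_rpow
      (Finset.sum_nonneg fun d _ => Real.rpow_nonneg (abs_nonneg _) v) hsum (by positivity)
  have hstep2 : (∑ d : Option K, T d ^ v) ^ (1/v)
      ≤ ((q:ℝ)+1) ^ (1/v - 1/u) * ((q:ℝ)^(u-2) * (2*(q:ℝ)+1) * Nu) ^ (1/u) := by
    calc (∑ d : Option K, T d ^ v) ^ (1/v)
        ≤ (((q:ℝ)+1) ^ (1 - v/u) * (∑ d : Option K, T d ^ u) ^ (v/u)) ^ (1/v) :=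
          Real.rpow_le_rpow hSv0 hpm2 (by positivity)
      _ = ((q:ℝ)+1) ^ ((1 - v/u) * (1/v)) * (∑ d : Option K, T d ^ u) ^ ((v/u) * (1/v)) := by
          rw [Real.mul_rpow (Real.rpow_nonneg (by positivity) _) (Real.rpow_nonneg hSu0 _),
            ← Real.rpow_mul (by positivity : (0:ℝ) ≤ (q:ℝ)+1), ← Real.rpow_mul hSu0]
      _ = ((q:ℝ)+1) ^ (1/v - 1/u) * (∑ d : Option K, T d ^ u) ^ (1/u) := by
          rw [show (1 - v/u) * (1/v) = 1/v - 1/u by field_simp; try ring; try tauto,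
            show (v/u) * (1/v) = 1/u by field_simp; try ring; try tauto]
      _ ≤ ((q:ℝ)+1) ^ (1/v - 1/u) * ((q:ℝ)^(u-2) * (2*(q:ℝ)+1) * Nu) ^ (1/u) := by
          apply mul_le_mul_of_nonneg_left _ (Real.rpow_nonneg (by positivity) _)
          exact Real.rpow_le_rpow hSu0 hSu (by positivity)
  have he1 : (0:ℝ) ≤ 1/v - 1/u := by
    rw [sub_nonneg]
    exact one_div_le_one_div_of_le hv0 hvu
  have hb1 : ((q:ℝ)+1) ^ (1/v - 1/u) ≤ 2 ^ (1/v - 1/u) * (q:ℝ) ^ (1/v - 1/u) := by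
    rw [← Real.mul_rpow (by norm_num) hq0.le]
    exact Real.rpow_le_rpow (by positivity) (by linarith) he1
  have hb2 : ((q:ℝ)^(u-2) * (2*(q:ℝ)+1) * Nu) ^ (1/u)
      ≤ (q:ℝ)^((u-2)*(1/u)) * (3 ^ ((1:ℝ)/u) * (q:ℝ) ^ ((1:ℝ)/u)) * Nu ^ (1/u) := by
    rw [Real.mul_rpow (by positivity) hNu0, Real.mul_rpow (by positivity) (by positivity),
      ← Real.rpow_mul hq0.le]
    have h3q : ((2*(q:ℝ)+1)) ^ ((1:ℝ)/u) ≤ 3 ^ ((1:ℝ)/u) * (q:ℝ) ^ ((1:ℝ)/u) := by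
      rw [← Real.mul_rpow (by norm_num) hq0.le]
      exact Real.rpow_le_rpow (by positivity) (by linarith) (by positivity)
    apply mul_le_mul_of_nonneg_right _ (Real.rpow_nonneg hNu0 _)
    exact mul_le_mul_of_nonneg_left h3q (Real.rpow_nonneg hq0.le _)
  have hc : (2:ℝ) ^ (1/v - 1/u) * 3 ^ ((1:ℝ)/u) ≤ 2 * Real.sqrt 2 := by
    have h3 : (3:ℝ) ^ ((1:ℝ)/u) = 2 ^ ((1:ℝ)/u) * (3/2) ^ ((1:ℝ)/u) := by
      rw [← Real.mul_rpow (by norm_num) (by norm_num)]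
      norm_num
    rw [h3, ← mul_assoc, ← Real.rpow_add (by norm_num : (0:ℝ) < 2),
      show 1/v - 1/u + 1/u = 1/v by ring]
    have h2v : (2:ℝ) ^ ((1:ℝ)/v) ≤ 2 := by
      calc (2:ℝ)^((1:ℝ)/v) ≤ 2^(1:ℝ) :=
            Real.rpow_le_rpow_of_exponent_le (by norm_num)
              (by rw [div_le_one hv0]; exact hv)
        _ = 2 := Real.rpow_one 2
    have h32 : ((3:ℝ)/2) ^ ((1:ℝ)/u) ≤ Real.sqrt 2 := by
      calc ((3:ℝ)/2)^((1:ℝ)/u) ≤ ((3:ℝ)/2)^((1:ℝ)/2) :=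
            Real.rpow_le_rpow_of_exponent_le (by norm_num)
              (one_div_le_one_div_of_le (by norm_num) hu)
        _ = Real.sqrt (3/2) := (Real.sqrt_eq_rpow _).symm
        _ ≤ Real.sqrt 2 := Real.sqrt_le_sqrt (by norm_num)
    exact mul_le_mul h2v h32 (Real.rpow_nonneg (by norm_num) _) (by norm_num)
  calc lpNormR v (MH1 Fc)
      ≤ ((q:ℝ)+1) ^ (1/v - 1/u) * ((q:ℝ)^(u-2) * (2*(q:ℝ)+1) * Nu) ^ (1/u) :=
        hstep1.trans hstep2
    _ ≤ (2 ^ (1/v - 1/u) * (q:ℝ) ^ (1/v - 1/u))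
        * ((q:ℝ)^((u-2)*(1/u)) * (3 ^ ((1:ℝ)/u) * (q:ℝ) ^ ((1:ℝ)/u)) * Nu ^ (1/u)) :=
        mul_le_mul hb1 hb2 (Real.rpow_nonneg (by positivity) _) (by positivity)
    _ = ((2:ℝ) ^ (1/v - 1/u) * 3 ^ ((1:ℝ)/u))
        * ((q:ℝ) ^ (1/v - 1/u) * (q:ℝ)^((u-2)*(1/u)) * (q:ℝ) ^ ((1:ℝ)/u)) * Nu ^ (1/u) := by
        ring
    _ = ((2:ℝ) ^ (1/v - 1/u) * 3 ^ ((1:ℝ)/u))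
        * (q:ℝ) ^ (1/v - 1/u + (u-2)*(1/u) + (1:ℝ)/u) * Nu ^ (1/u) := by
        rw [← Real.rpow_add hq0, ← Real.rpow_add hq0]
    _ = ((2:ℝ) ^ (1/v - 1/u) * 3 ^ ((1:ℝ)/u))
        * (q:ℝ) ^ (1 + 1/v - 2/u) * Nu ^ (1/u) := by
        rw [show 1/v - 1/u + (u-2)*(1/u) + (1:ℝ)/u = 1 + 1/v - 2/u by field_simp; try ring; try tauto]
    _ ≤ 2 * Real.sqrt 2 * (q:ℝ) ^ (1 + 1/v - 2/u) * Nu ^ (1/u) := by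
        apply mul_le_mul_of_nonneg_right _ (Real.rpow_nonneg hNu0 _)
        exact mul_le_mul_of_nonneg_right hc (Real.rpow_nonneg hq0.le _)
    _ = 2 * Real.sqrt 2 * ((Fintype.card K : ℕ) : ℝ) ^ (1 + 1/v - 2/u) * lpNormC u Fc := by
        rw [hNorm, hq]
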